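/- In a well-structured transition system with a decidable WQO and effectively computable predecessor bases, the backward-reachability sequence U₀ = U, U_{k+1} = U_k ∪ Pred(U_k) stabilizes after finitely many steps: there exists k such that U_{k+1} = U_k. -/
import Mathlib


/-- The backward-reachability sequence `U₀ = U`, `U_{k+1} = U_k ∪ Pred(U_k)`
of upwards-closed sets in a well-structured transition system stabilizes
after finitely many steps. -/
theorem backward_reachability_stabilizes {Q : Type}
    (step : Q → Q → Prop) (le : Q → Q → Prop)
    (hrefl : Reflexive le) (htrans : Transitive le)
    (hwqo : ∀ f : ℕ → Q, ∃ i j, i < j ∧ le (f i) (f j))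
    (U : ℕ → Set Q)
    (hU0 : ∀ q p, q ∈ U 0 → le q p → p ∈ U 0)
    (hclosed : ∀ V : Set Q, (∀ q p, q ∈ V → le q p → p ∈ V) →
      ∀ q p, q ∈ V ∪ {x | ∃ u ∈ V, step x u} → le q p →
        p ∈ V ∪ {x | ∃ u ∈ V, step x u})
    (hsucc : ∀ k, U (k + 1) = U k ∪ {x | ∃ u ∈ U k, step x u}) :
    ∃ k, U (k + 1) = U k := by
  -- each U k is upward closed
  have hup : ∀ k, ∀ q p, q ∈ U k → le q p → p ∈ U k := by
    intro k
    induction k with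
    | zero => exact hU0
    | succ n ih =>
      intro q p hq hle
      rw [hsucc n] at hq ⊢
      exact hclosed (U n) ih q p hq hle
  -- monotone
  have hmono : ∀ i j, i ≤ j → U i ⊆ U j := by
    intro i j hij
    induction hij with
    | refl => exact subset_rfl
    | step _ ih =>
      rename_i m _
      exact ih.trans (by rw [hsucc m]; exact Set.subset_union_left)
  by_contra h
  push_neg at h
  have hex : ∀ k, ∃ q, q ∈ U (k + 1) ∧ q ∉ U k := by
    intro k
    by_contra hc
    push_neg at hc
    exact h k (Set.Subset.antisymm (fun q hq => hc q hq)
      (hmono k (k + 1) (Nat.le_succ k)))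
  choose f hf1 hf2 using hex
  obtain ⟨i, j, hij, hle⟩ := hwqo f
  exact hf2 j (hup j (f i) (f j) (hmono (i + 1) j hij (hf1 i)) hle)
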